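/- Let K be a complete nonarchimedean (ultrametric) normed field of characteristic 0, let p be a prime with ‖p‖ = p^{-1} in K (e.g., K = ℂ_p), and let R = {c ∈ K : ‖c‖ ≤ 1} be its ring of integers. Let m ≥ 2 be an integer with p ∣ m, and let φ(x) ∈ x^m + x^{m+1}R[[x]]. Then the Böttcher coordinate f_φ converges on the disk D = {x ∈ K : ‖x‖ < p^{-1/(p-1)}·‖m‖} and its evaluation defines a bijective isometry f_φ : D → D, i.e., f_φ maps D onto D and ‖f_φ(x) − f_φ(y)‖ = ‖x − y‖ for all x, y ∈ D. -/

import Mathlib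

/-- Composition `f(g(x))` of formal power series, intended for `g` with zero
constant coefficient. -/
noncomputable def PowerSeries.comp {K : Type*} [CommSemiring K] (f g : PowerSeries K) :
    PowerSeries K :=
  PowerSeries.mk fun n =>
    PowerSeries.coeff n
      (∑ k ∈ Finset.range (n + 1), PowerSeries.C (PowerSeries.coeff k f) * g ^ k)

open PowerSeries Finset

section Aux
variable {K : Type*}

lemma norm_sub_le_max' [NormedField K] [IsUltrametricDist K] (x y : K) :
    ‖x - y‖ ≤ max ‖x‖ ‖y‖ := by
  rw [sub_eq_add_neg]
  refine (IsUltrametricDist.norm_add_le_max _ _).trans ?_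
  rw [norm_neg]

end Aux

open PowerSeries Finset

section Aux
variable {K : Type*}

lemma coeff_pow_congr [CommRing K] {u v : PowerSeries K} {N : ℕ}
    (h : ∀ i ≤ N, coeff i u = coeff i v) (t : ℕ) :
    ∀ n ≤ N, coeff n (u ^ t) = coeff n (v ^ t) := by
  induction t with
  | zero => intro n _; rfl
  | succ t ih =>
    intro n hn
    rw [pow_succ, pow_succ, coeff_mul, coeff_mul]
    refine Finset.sum_congr rfl ?_
    rintro ⟨a, b⟩ hab
    rw [Finset.HasAntidiagonal.mem_antidiagonal] at hab
    rw [ih a (by omega), h b (by omega)]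

lemma coeff_pow_congr_high [CommRing K] {u v : PowerSeries K} {N : ℕ} (hN : 1 ≤ N)
    (hu0 : coeff 0 u = 0) (h : ∀ i < N, coeff i u = coeff i v) {t : ℕ} (ht : 2 ≤ t) :
    coeff N (u ^ t) = coeff N (v ^ t) := by
  obtain ⟨s, rfl⟩ : ∃ s, t = s + 1 := ⟨t - 1, by omega⟩
  have hs : s ≠ 0 := by omega
  have hv0 : coeff 0 v = 0 := (h 0 hN) ▸ hu0
  have hzu : coeff 0 (u ^ s) = 0 := by
    rw [coeff_zero_eq_constantCoeff, map_pow, ← coeff_zero_eq_constantCoeff, hu0, zero_pow hs]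
  have hzv : coeff 0 (v ^ s) = 0 := by
    rw [coeff_zero_eq_constantCoeff, map_pow, ← coeff_zero_eq_constantCoeff, hv0, zero_pow hs]
  rw [pow_succ, pow_succ, coeff_mul, coeff_mul]
  refine Finset.sum_congr rfl ?_
  rintro ⟨a, b⟩ hab
  rw [Finset.HasAntidiagonal.mem_antidiagonal] at hab
  dsimp only at hab ⊢
  rcases Nat.eq_zero_or_pos b with hb | hb
  · subst hb; rw [hu0, hv0]; ring
  rcases Nat.eq_zero_or_pos a with ha | ha
  · subst ha; rw [hzu, hzv]; ring
  have ha' : a ≤ N - 1 := by omega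
  rw [coeff_pow_congr (N := N - 1) (fun i hi => h i (by omega)) s a ha', h b (by omega)]

lemma norm_coeff_pow_le [NormedField K] [IsUltrametricDist K] {v : PowerSeries K} {C q : ℝ}
    (hC : 0 ≤ C) (hq : 1 ≤ q) (h : ∀ i, ‖coeff i v‖ ≤ C * q ^ i) (t : ℕ) :
    ∀ n, ‖coeff n (v ^ t)‖ ≤ C ^ t * q ^ n := by
  have hq0 : (0:ℝ) ≤ q := le_trans zero_le_one hq
  induction t with
  | zero =>
    intro n
    rw [pow_zero, pow_zero, one_mul]
    rcases Nat.eq_zero_or_pos n with hn | hn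
    · subst hn; simp only [coeff_zero_eq_constantCoeff, map_one, norm_one, pow_zero, le_refl]
    · rw [PowerSeries.coeff_one, if_neg (by omega)]
      simp only [norm_zero]
      exact one_le_pow₀ hq |>.trans_eq rfl |> le_trans zero_le_one
  | succ t ih =>
    intro n
    rw [pow_succ, coeff_mul]
    refine IsUltrametricDist.norm_sum_le_of_forall_le_of_nonneg (by positivity) ?_
    rintro ⟨a, b⟩ hab
    rw [Finset.HasAntidiagonal.mem_antidiagonal] at hab
    rw [norm_mul]
    calc ‖coeff a (v ^ t)‖ * ‖coeff b v‖ ≤ (C ^ t * q ^ a) * (C * q ^ b) := by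
          exact mul_le_mul (ih a) (h b) (norm_nonneg _) (by positivity)
      _ = C ^ (t + 1) * q ^ n := by rw [← hab]; ring

end Aux

open Finset

section Aux2
variable {K : Type*} [NormedField K] [IsUltrametricDist K]

lemma norm_natCast_eq_one_of_not_dvd {p : ℕ} (hp : p.Prime) (hpnorm : ‖(p : K)‖ = (p : ℝ)⁻¹)
    {u : ℕ} (hu : ¬ p ∣ u) : ‖(u : K)‖ = 1 := by
  have hp1 : (1 : ℝ) < p := by exact_mod_cast hp.one_lt
  refine le_antisymm (IsUltrametricDist.norm_natCast_le_one K u) ?_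
  by_contra hlt
  push_neg at hlt
  have hcop : IsCoprime (p : ℤ) (u : ℤ) := by
    rw [Int.isCoprime_iff_gcd_eq_one, Int.gcd_natCast_natCast]
    exact (hp.coprime_iff_not_dvd.2 hu)
  obtain ⟨a, b, hab⟩ := hcop
  have hone : (1 : K) = (a : K) * (p : K) + (b : K) * (u : K) := by
    have := congrArg (fun z : ℤ => (z : K)) hab
    push_cast at this
    exact this.symm
  have h1 : (1 : ℝ) = ‖(1 : K)‖ := (norm_one).symm
  have hbound : ‖(1 : K)‖ ≤ max (‖(a : K)‖ * ‖(p : K)‖) (‖(b : K)‖ * ‖(u : K)‖) := by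
    rw [hone]
    refine (IsUltrametricDist.norm_add_le_max _ _).trans ?_
    rw [norm_mul, norm_mul]
  have ha1 : ‖(a : K)‖ ≤ 1 := IsUltrametricDist.norm_intCast_le_one K a
  have hb1 : ‖(b : K)‖ ≤ 1 := IsUltrametricDist.norm_intCast_le_one K b
  have hplt : ‖(p : K)‖ < 1 := by rw [hpnorm]; rw [inv_lt_one_iff₀]; right; exact hp1
  have : ‖(1:K)‖ < 1 := lt_of_le_of_lt hbound (by
    apply max_lt
    · calc ‖(a : K)‖ * ‖(p : K)‖ ≤ 1 * ‖(p:K)‖ := by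
            exact mul_le_mul_of_nonneg_right ha1 (norm_nonneg _)
        _ < 1 := by rwa [one_mul]
    · calc ‖(b : K)‖ * ‖(u : K)‖ ≤ 1 * ‖(u:K)‖ := by
            exact mul_le_mul_of_nonneg_right hb1 (norm_nonneg _)
        _ < 1 := by rwa [one_mul])
  rw [norm_one] at this; exact lt_irrefl _ this

lemma norm_natCast_eq {p : ℕ} (hp : p.Prime) (hpnorm : ‖(p : K)‖ = (p : ℝ)⁻¹)
    {t : ℕ} (ht : t ≠ 0) : ‖(t : K)‖ = ((p : ℝ) ^ (t.factorization p))⁻¹ := by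
  conv_lhs => rw [← Nat.ordProj_mul_ordCompl_eq_self t p]
  push_cast
  rw [norm_mul, norm_pow, hpnorm,
    norm_natCast_eq_one_of_not_dvd hp hpnorm (Nat.not_dvd_ordCompl hp ht), mul_one, inv_pow]

end Aux2

section Aux3
variable {K : Type*} [NormedField K] [IsUltrametricDist K]

lemma norm_eps_pow_le_norm_natCast {p : ℕ} (hp : p.Prime) (hpnorm : ‖(p : K)‖ = (p : ℝ)⁻¹)
    {t : ℕ} (ht : t ≠ 0) :
    ((p : ℝ) ^ (-1 / ((p : ℝ) - 1))) ^ (t - 1) ≤ ‖(t : K)‖ := by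
  have hp1 : (1 : ℝ) < p := by exact_mod_cast hp.one_lt
  have hp0 : (0 : ℝ) < p := by linarith
  set v := t.factorization p with hv
  rw [norm_natCast_eq hp hpnorm ht]
  have h1 : ((p : ℝ) ^ (v : ℕ))⁻¹ = (p : ℝ) ^ (-(v : ℝ)) := by
    rw [← Real.rpow_natCast (p : ℝ) v, ← Real.rpow_neg hp0.le]
  have h2 : ((p : ℝ) ^ (-1 / ((p : ℝ) - 1))) ^ (t - 1) =
      (p : ℝ) ^ ((-1 / ((p : ℝ) - 1)) * (t - 1 : ℕ)) := by
    rw [← Real.rpow_natCast ((p : ℝ) ^ (-1 / ((p : ℝ) - 1))) (t - 1), ← Real.rpow_mul hp0.le]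
  rw [h1, h2, Real.rpow_le_rpow_left_iff hp1]
  have hvt : (v : ℝ) * ((p : ℝ) - 1) ≤ ((t - 1 : ℕ) : ℝ) := by
    have hb : (1 : ℝ) + v * ((p : ℝ) - 1) ≤ ((p : ℝ)) ^ (v : ℕ) := by
      have := one_add_mul_le_pow (a := (p : ℝ) - 1) (by linarith) v
      calc (1 : ℝ) + v * ((p : ℝ) - 1) = 1 + (v : ℕ) * ((p : ℝ) - 1) := by push_cast; ring
        _ ≤ (1 + ((p : ℝ) - 1)) ^ (v : ℕ) := this
        _ = (p : ℝ) ^ (v : ℕ) := by ring_nf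
    have hpt : ((p : ℝ)) ^ (v : ℕ) ≤ (t : ℝ) := by
      exact_mod_cast Nat.cast_le.2 (Nat.ordProj_le p ht)
    have ht1 : ((t - 1 : ℕ) : ℝ) = (t : ℝ) - 1 := by
      have : 1 ≤ t := Nat.one_le_iff_ne_zero.2 ht
      push_cast [this]; ring
    rw [ht1]; linarith
  have hpm1 : (0 : ℝ) < (p : ℝ) - 1 := by linarith
  rw [neg_div, neg_mul, neg_le_neg_iff, div_mul_eq_mul_div, one_mul, le_div_iff₀ hpm1] at *
  linarith [hvt]

lemma norm_choose_mul_eps_pow_le {p : ℕ} (hp : p.Prime) (hpnorm : ‖(p : K)‖ = (p : ℝ)⁻¹)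
    {m t : ℕ} (hm : 1 ≤ m) (ht : 1 ≤ t) :
    ‖(m.choose t : K)‖ * ((p : ℝ) ^ (-1 / ((p : ℝ) - 1))) ^ (t - 1) ≤ ‖(m : K)‖ := by
  obtain ⟨m1, rfl⟩ : ∃ m1, m = m1 + 1 := ⟨m - 1, by omega⟩
  obtain ⟨t1, rfl⟩ : ∃ t1, t = t1 + 1 := ⟨t - 1, by omega⟩
  have hkey : ((m1 + 1 : ℕ) : K) * ((m1.choose t1 : ℕ) : K)
      = (((m1 + 1).choose (t1 + 1) : ℕ) : K) * ((t1 + 1 : ℕ) : K) := by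
    exact_mod_cast congrArg (fun z : ℕ => (z : K)) (Nat.add_one_mul_choose_eq m1 t1)
  have hnorm : ‖((m1 + 1).choose (t1 + 1) : K)‖ * ‖((t1 + 1 : ℕ) : K)‖ ≤ ‖((m1 + 1 : ℕ) : K)‖ := by
    calc ‖((m1 + 1).choose (t1 + 1) : K)‖ * ‖((t1 + 1 : ℕ) : K)‖
        = ‖((m1 + 1 : ℕ) : K)‖ * ‖((m1.choose t1 : ℕ) : K)‖ := by
          rw [← norm_mul, ← norm_mul, ← hkey]
      _ ≤ ‖((m1 + 1 : ℕ) : K)‖ * 1 := by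
          exact mul_le_mul_of_nonneg_left (IsUltrametricDist.norm_natCast_le_one K _)
            (norm_nonneg _)
      _ = ‖((m1 + 1 : ℕ) : K)‖ := mul_one _
  have heps := norm_eps_pow_le_norm_natCast (K := K) hp hpnorm (t := t1 + 1) (by omega)
  simp only [Nat.add_sub_cancel] at heps ⊢
  calc ‖((m1 + 1).choose (t1 + 1) : K)‖ * ((p : ℝ) ^ (-1 / ((p : ℝ) - 1))) ^ t1
      ≤ ‖((m1 + 1).choose (t1 + 1) : K)‖ * ‖((t1 + 1 : ℕ) : K)‖ :=
        mul_le_mul_of_nonneg_left heps (norm_nonneg _)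
    _ ≤ ‖((m1 + 1 : ℕ) : K)‖ := hnorm
    _ = ‖((m1 + 1 : ℕ) : K)‖ := rfl

end Aux3

section Main
variable {K : Type*} [NormedField K] [IsUltrametricDist K]

lemma bottcher_coeff_bound
    (p : ℕ) (hp : p.Prime) (hpnorm : ‖(p : K)‖ = (p : ℝ)⁻¹)
    (m : ℕ) (hm : 2 ≤ m) (hMpos : 0 < ‖(m : K)‖)
    (φ : PowerSeries K) (hφint : ∀ k, ‖PowerSeries.coeff k φ‖ ≤ 1)
    (hφlow : ∀ k < m, PowerSeries.coeff k φ = 0)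
    (hφlead : PowerSeries.coeff m φ = 1)
    (f : PowerSeries K) (hf0 : PowerSeries.coeff 0 f = 0)
    (hf1 : PowerSeries.coeff 1 f = 1)
    (hfB : φ.comp f = f.comp (PowerSeries.X ^ m)) :
    ∀ k, 2 ≤ k → ‖PowerSeries.coeff k f‖ ≤
      (p : ℝ) ^ (-1 / ((p : ℝ) - 1)) *
        (((p : ℝ) ^ (-1 / ((p : ℝ) - 1)) * ‖(m : K)‖)⁻¹) ^ (k - 1) := by
  have hp1 : (1 : ℝ) < p := by exact_mod_cast hp.one_lt
  set ε : ℝ := (p : ℝ) ^ (-1 / ((p : ℝ) - 1)) with hεdef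
  set M : ℝ := ‖(m : K)‖ with hMdef
  set q : ℝ := (ε * M)⁻¹ with hqdef
  have hε0 : 0 < ε := Real.rpow_pos_of_pos (by linarith) _
  have hε1 : ε ≤ 1 := by
    apply Real.rpow_le_one_of_one_le_of_nonpos (by linarith)
    apply div_nonpos_of_nonpos_of_nonneg <;> linarith
  have hM1 : M ≤ 1 := IsUltrametricDist.norm_natCast_le_one K m
  have hq0 : 0 < q := by
    rw [hqdef]; exact inv_pos.2 (mul_pos hε0 hMpos)
  have hq1 : 1 ≤ q := by
    rw [hqdef]
    rw [one_le_inv_iff₀]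
    constructor
    · exact mul_pos hε0 hMpos
    · calc ε * M ≤ 1 * 1 := mul_le_mul hε1 hM1 (le_of_lt hMpos) zero_le_one
        _ = 1 := one_mul 1
  have hMεq : M * ε * q = 1 := by
    rw [hqdef]; field_simp
  -- the coefficient function and the series w with f = X * (1 + w)
  set c : ℕ → K := fun i => PowerSeries.coeff i f with hcdef
  set w : PowerSeries K := PowerSeries.mk fun i => if i = 0 then 0 else c (i + 1) with hwdef
  have hw0 : PowerSeries.coeff 0 w = 0 := by rw [hwdef, coeff_mk]; simp
  have hwcoeff : ∀ i, i ≠ 0 → PowerSeries.coeff i w = c (i + 1) := by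
    intro i hi; rw [hwdef, coeff_mk, if_neg hi]
  have hfw : f = X * (1 + w) := by
    ext n
    rcases n with _ | d
    · rw [hf0]
      simp [PowerSeries.coeff_zero_eq_constantCoeff]
    · rw [show (X : PowerSeries K) * (1 + w) = X ^ 1 * (1 + w) by rw [pow_one],
        coeff_X_pow_mul' (1 + w) 1 (d + 1), if_pos (by omega)]
      rcases d with _ | e
      · simpa [← PowerSeries.coeff_zero_eq_constantCoeff, hw0] using hf1
      · rw [map_add]
        rw [PowerSeries.coeff_one, if_neg (by omega), hwcoeff _ (by omega), zero_add, hcdef]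
        norm_num
  intro k
  induction k using Nat.strong_induction_on with
  | _ k IH =>
  intro hk
  obtain ⟨K2, rfl⟩ : ∃ K2, k = K2 + 2 := ⟨k - 2, by omega⟩
  simp only [show K2 + 2 - 1 = K2 + 1 from rfl]
  set n : ℕ := K2 + 1 + m with hndef
  have hmn : m + 1 ≤ n := by omega
  -- the coefficient of xⁿ on the right side of the functional equation
  have hRHS : PowerSeries.coeff n (f.comp (X ^ m)) = if m ∣ n then c (n / m) else 0 := by
    rw [PowerSeries.comp, coeff_mk, map_sum]
    have hterm : ∀ j, PowerSeries.coeff n (C (PowerSeries.coeff j f) * (X ^ m) ^ j)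
        = c j * (if n = m * j then 1 else 0) := by
      intro j
      rw [coeff_C_mul, ← pow_mul, PowerSeries.coeff_X_pow]
    have hsum : ∑ j ∈ range (n + 1),
        PowerSeries.coeff n (C (PowerSeries.coeff j f) * (X ^ m) ^ j)
        = c (n / m) * (if n = m * (n / m) then 1 else 0) := by
      rw [Finset.sum_eq_single (n / m)]
      · exact hterm _
      · intro j hj hjne
        rw [hterm]
        rw [if_neg, mul_zero]
        intro heq
        exact hjne (by rw [heq]; rw [Nat.mul_div_cancel_left _ (by omega : 0 < m)])
      · intro hnot
        exact absurd (Finset.mem_range.2 (by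
          have := Nat.div_le_self n m; omega)) hnot
    rw [hsum]
    by_cases hdvd : m ∣ n
    · rw [if_pos hdvd, if_pos (Nat.mul_div_cancel' hdvd).symm, mul_one]
    · rw [if_neg hdvd, if_neg, mul_zero]
      intro heq
      exact hdvd ⟨n / m, heq⟩
  -- expansion of the coefficients of fʲ
  have hpowj : ∀ j, j ≤ n → PowerSeries.coeff n (f ^ j)
      = ∑ t ∈ range (j + 1), (j.choose t : K) * PowerSeries.coeff (n - j) (w ^ t) := by
    intro j hj
    rw [hfw, mul_pow, coeff_X_pow_mul' ((1 + w) ^ j) j n, if_pos hj,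
      add_comm (1 : PowerSeries K) w, add_pow, map_sum]
    refine Finset.sum_congr rfl fun t _ => ?_
    rw [one_pow, mul_one, show ((j.choose t : ℕ) : PowerSeries K) = C ((j.choose t : ℕ) : K) by
      rw [map_natCast (C (R := K))], coeff_mul_C, mul_comm]
  -- the functional equation at coefficient n
  have hco : ∑ j ∈ range (n + 1), PowerSeries.coeff j φ * PowerSeries.coeff n (f ^ j)
      = if m ∣ n then c (n / m) else 0 := by
    have hL : PowerSeries.coeff n (φ.comp f)
        = ∑ j ∈ range (n + 1), PowerSeries.coeff j φ * PowerSeries.coeff n (f ^ j) := by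
      rw [PowerSeries.comp, coeff_mk, map_sum]
      exact Finset.sum_congr rfl fun j _ => coeff_C_mul _ _ _
    rw [← hL, hfB, hRHS]
  -- split the sum over j
  have hsplit1 : ∑ j ∈ range (n + 1), PowerSeries.coeff j φ * PowerSeries.coeff n (f ^ j)
      = PowerSeries.coeff n (f ^ m)
        + ∑ j ∈ Icc (m + 1) n, PowerSeries.coeff j φ * PowerSeries.coeff n (f ^ j) := by
    rw [← Finset.sum_subset (s₁ := Icc m n) (fun x hx => Finset.mem_range.2 (by
        rw [Finset.mem_Icc] at hx; omega)) (fun x hx hnx => by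
        rw [Finset.mem_range] at hx
        rw [Finset.mem_Icc] at hnx
        rw [hφlow x (by omega), zero_mul])]
    rw [← Finset.add_sum_erase _ _ (Finset.mem_Icc.2 ⟨le_refl m, by omega⟩),
      Finset.Icc_erase_left, ← Finset.Icc_add_one_left_eq_Ioc, hφlead, one_mul]
  -- split the binomial sum for j = m
  have hfm : PowerSeries.coeff n (f ^ m)
      = (m : K) * c (K2 + 2) + ∑ t ∈ Icc 2 m, (m.choose t : K)
          * PowerSeries.coeff (K2 + 1) (w ^ t) := by
    have hnm : n - m = K2 + 1 := by omega
    rw [hpowj m (by omega), hnm]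
    have h0 : ((m.choose 0 : ℕ) : K) * PowerSeries.coeff (K2 + 1) (w ^ 0) = 0 := by
      rw [pow_zero, PowerSeries.coeff_one, if_neg (by omega), mul_zero]
    have h1 : ((m.choose 1 : ℕ) : K) * PowerSeries.coeff (K2 + 1) (w ^ 1) = (m : K) * c (K2 + 2) := by
      rw [Nat.choose_one_right, pow_one, hwcoeff (K2 + 1) (by omega)]
    rw [Finset.range_eq_Ico, Finset.Ico_add_one_right_eq_Icc,
      ← Finset.add_sum_erase _ _ (Finset.mem_Icc.2 ⟨le_refl 0, Nat.zero_le m⟩),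
      Finset.Icc_erase_left, ← Finset.Icc_add_one_left_eq_Ioc, zero_add,
      ← Finset.add_sum_erase _ _ (Finset.mem_Icc.2 ⟨le_refl 1, by omega⟩),
      Finset.Icc_erase_left, ← Finset.Icc_add_one_left_eq_Ioc, h0, h1, zero_add]; rfl
  -- isolate m * c k
  have hiso : (m : K) * c (K2 + 2) = (if m ∣ n then c (n / m) else 0)
      - (∑ t ∈ Icc 2 m, (m.choose t : K) * PowerSeries.coeff (K2 + 1) (w ^ t))
      - (∑ j ∈ Icc (m + 1) n, PowerSeries.coeff j φ * PowerSeries.coeff n (f ^ j)) := by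
    rw [hsplit1, hfm] at hco
    linear_combination hco
  -- truncated series
  set w' : PowerSeries K := PowerSeries.mk fun i =>
    if i < K2 + 1 ∧ i ≠ 0 then c (i + 1) else 0 with hw'def
  have hagree : ∀ i < K2 + 1, PowerSeries.coeff i w = PowerSeries.coeff i w' := by
    intro i hi
    rw [hwdef, hw'def, coeff_mk, coeff_mk]
    by_cases h0 : i = 0
    · subst h0; simp
    · rw [if_neg h0, if_pos ⟨hi, h0⟩]
  have hw'bound : ∀ i, ‖PowerSeries.coeff i w'‖ ≤ ε * q ^ i := by
    intro i
    rw [hw'def, coeff_mk]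
    split_ifs with hcond
    · obtain ⟨hi1, hi0⟩ := hcond
      have := IH (i + 1) (by omega) (by omega)
      simpa using this
    · rw [norm_zero]; positivity
  have hw'pow : ∀ t i, ‖PowerSeries.coeff i (w' ^ t)‖ ≤ ε ^ t * q ^ i :=
    fun t i => norm_coeff_pow_le hε0.le hq1 hw'bound t i
  have hR : ‖if m ∣ n then c (n / m) else 0‖ ≤ q ^ K2 := by
    split_ifs with hdvd
    · obtain ⟨s, hs⟩ := hdvd
      have hdiv : n / m = s := by rw [hs, Nat.mul_div_cancel_left _ (by omega : 0 < m)]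
      rw [hdiv]
      have hns : m * s = K2 + 1 + m := hs.symm
      have hs0 : s ≠ 0 := by rintro rfl; rw [mul_zero] at hns; omega
      have hs1 : s ≠ 1 := by rintro rfl; rw [mul_one] at hns; omega
      have hmul : m * s = m * (s - 1) + m := by
        rw [← Nat.mul_succ]; congr 1; omega
      have h2s : 2 * (s - 1) ≤ m * (s - 1) := Nat.mul_le_mul_right _ hm
      have hsK : s ≤ K2 + 1 := by omega
      calc ‖c s‖ ≤ ε * q ^ (s - 1) := IH s (by omega) (by omega)
        _ ≤ 1 * q ^ K2 :=
            mul_le_mul hε1 (pow_le_pow_right₀ hq1 (by omega)) (by positivity) zero_le_one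
        _ = q ^ K2 := one_mul _
    · rw [norm_zero]; positivity
  have hT : ∀ t ∈ Icc 2 m,
      ‖(m.choose t : K) * PowerSeries.coeff (K2 + 1) (w ^ t)‖ ≤ q ^ K2 := by
    intro t ht
    rw [Finset.mem_Icc] at ht
    rw [coeff_pow_congr_high (by omega) hw0 hagree (by omega), norm_mul]
    have h1 : ‖PowerSeries.coeff (K2 + 1) (w' ^ t)‖ ≤ ε ^ t * q ^ (K2 + 1) := hw'pow t (K2 + 1)
    have h2 : ‖(m.choose t : K)‖ * ε ^ (t - 1) ≤ M :=
      norm_choose_mul_eps_pow_le hp hpnorm (by omega) (by omega)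
    have hεt : ε ^ t = ε ^ (t - 1) * ε := by rw [← pow_succ]; congr 1; omega
    calc ‖(m.choose t : K)‖ * ‖PowerSeries.coeff (K2 + 1) (w' ^ t)‖
        ≤ ‖(m.choose t : K)‖ * (ε ^ t * q ^ (K2 + 1)) :=
          mul_le_mul_of_nonneg_left h1 (norm_nonneg _)
      _ = (‖(m.choose t : K)‖ * ε ^ (t - 1)) * (ε * q ^ (K2 + 1)) := by rw [hεt]; ring
      _ ≤ M * (ε * q ^ (K2 + 1)) := mul_le_mul_of_nonneg_right h2 (by positivity)
      _ = (M * ε * q) * q ^ K2 := by rw [pow_succ]; ring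
      _ = q ^ K2 := by rw [hMεq, one_mul]
  have hS : ∀ j ∈ Icc (m + 1) n,
      ‖PowerSeries.coeff j φ * PowerSeries.coeff n (f ^ j)‖ ≤ q ^ K2 := by
    intro j hj
    rw [Finset.mem_Icc] at hj
    rw [norm_mul, hpowj j hj.2]
    have hnj : n - j ≤ K2 := by omega
    have hsum : ‖∑ t ∈ range (j + 1),
        (j.choose t : K) * PowerSeries.coeff (n - j) (w ^ t)‖ ≤ q ^ K2 := by
      refine IsUltrametricDist.norm_sum_le_of_forall_le_of_nonneg (by positivity) ?_
      intro t _
      rw [norm_mul]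
      have hconv : PowerSeries.coeff (n - j) (w ^ t) = PowerSeries.coeff (n - j) (w' ^ t) :=
        coeff_pow_congr (N := K2) (fun i hi => hagree i (by omega)) t (n - j) hnj
      rw [hconv]
      calc ‖(j.choose t : K)‖ * ‖PowerSeries.coeff (n - j) (w' ^ t)‖
          ≤ 1 * (ε ^ t * q ^ (n - j)) := mul_le_mul (IsUltrametricDist.norm_natCast_le_one K _)
            (hw'pow t (n - j)) (norm_nonneg _) zero_le_one
        _ ≤ 1 * (1 * q ^ K2) := by
            refine mul_le_mul_of_nonneg_left ?_ zero_le_one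
            exact mul_le_mul (pow_le_one₀ hε0.le hε1) (pow_le_pow_right₀ hq1 hnj)
              (by positivity) zero_le_one
        _ = q ^ K2 := by ring
    exact le_trans (mul_le_mul (hφint j) hsum (norm_nonneg _) zero_le_one) (by rw [one_mul])
  have hfinal : ‖(m : K) * c (K2 + 2)‖ ≤ q ^ K2 := by
    rw [hiso]
    refine le_trans (norm_sub_le_max' _ _) ?_
    apply max_le
    · refine le_trans (norm_sub_le_max' _ _) ?_
      apply max_le hR
      exact IsUltrametricDist.norm_sum_le_of_forall_le_of_nonneg (by positivity) hT
    · exact IsUltrametricDist.norm_sum_le_of_forall_le_of_nonneg (by positivity) hS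
  rw [norm_mul] at hfinal
  have hgoal : ε * q ^ (K2 + 1) = q ^ K2 / M := by
    rw [eq_div_iff (ne_of_gt hMpos)]
    calc ε * q ^ (K2 + 1) * M = (M * ε * q) * q ^ K2 := by rw [pow_succ]; ring
      _ = q ^ K2 := by rw [hMεq, one_mul]
  rw [hgoal, le_div_iff₀ hMpos]
  calc ‖c (K2 + 2)‖ * M = ‖(m : K)‖ * ‖c (K2 + 2)‖ := by rw [hMdef]; ring
    _ ≤ q ^ K2 := hfinal

end Main

section Analytic
variable {K : Type*} [NormedField K] [IsUltrametricDist K]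

lemma norm_pow_sub_pow_le (x y : K) (k : ℕ) :
    ‖x ^ (k + 1) - y ^ (k + 1)‖ ≤ ‖x - y‖ * (max ‖x‖ ‖y‖) ^ k := by
  induction k with
  | zero => simp
  | succ k ih =>
    have hid : x ^ (k + 2) - y ^ (k + 2)
        = x * (x ^ (k + 1) - y ^ (k + 1)) + (x - y) * y ^ (k + 1) := by ring
    rw [hid]
    refine (IsUltrametricDist.norm_add_le_max _ _).trans (max_le ?_ ?_)
    · rw [norm_mul]
      calc ‖x‖ * ‖x ^ (k + 1) - y ^ (k + 1)‖
          ≤ (max ‖x‖ ‖y‖) * (‖x - y‖ * (max ‖x‖ ‖y‖) ^ k) :=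
            mul_le_mul (le_max_left _ _) ih (norm_nonneg _)
              (le_trans (norm_nonneg _) (le_max_left _ _))
        _ = ‖x - y‖ * (max ‖x‖ ‖y‖) ^ (k + 1) := by ring
    · rw [norm_mul, norm_pow]
      refine mul_le_mul_of_nonneg_left ?_ (norm_nonneg _)
      exact pow_le_pow_left₀ (norm_nonneg _) (le_max_right _ _) _

lemma norm_hasSum_le {u : ℕ → K} {s : K} {C : ℝ} (hu : HasSum u s) (hC : 0 ≤ C)
    (h : ∀ k, ‖u k‖ ≤ C) : ‖s‖ ≤ C := by
  refine le_of_tendsto hu.norm (Filter.Eventually.of_forall fun t => ?_)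
  exact IsUltrametricDist.norm_sum_le_of_forall_le_of_nonneg hC fun i _ => h i

end Analytic

/-- For `p ∣ m` and `φ ∈ x^m + x^{m+1}R[[x]]` over a complete
nonarchimedean field with `‖p‖ = 1/p`, the Böttcher coordinate converges on the
disk of radius `p^{-1/(p-1)}·‖m‖` and defines a bijective isometry of that disk
to itself. -/
theorem bottcher_isometry_of_dvd {K : Type*} [NormedField K] [CompleteSpace K]
    [IsUltrametricDist K] [CharZero K]
    (p : ℕ) (hp : p.Prime) (hpnorm : ‖(p : K)‖ = (p : ℝ)⁻¹)
    (m : ℕ) (hm : 2 ≤ m) (hpm : p ∣ m)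
    (φ : PowerSeries K) (hφint : ∀ k, ‖PowerSeries.coeff k φ‖ ≤ 1)
    (hφlow : ∀ k < m, PowerSeries.coeff k φ = 0)
    (hφlead : PowerSeries.coeff m φ = 1)
    (f : PowerSeries K) (hf0 : PowerSeries.coeff 0 f = 0)
    (hf1 : PowerSeries.coeff 1 f = 1)
    (hfB : φ.comp f = f.comp (PowerSeries.X ^ m)) :
    ∃ F : {x : K // ‖x‖ < (p : ℝ) ^ (-1 / ((p : ℝ) - 1)) * ‖(m : K)‖} →
        {x : K // ‖x‖ < (p : ℝ) ^ (-1 / ((p : ℝ) - 1)) * ‖(m : K)‖},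
      Function.Bijective F ∧
      (∀ x : {x : K // ‖x‖ < (p : ℝ) ^ (-1 / ((p : ℝ) - 1)) * ‖(m : K)‖},
        HasSum (fun k => PowerSeries.coeff k f * (x : K) ^ k) (F x : K)) ∧
      ∀ x y : {x : K // ‖x‖ < (p : ℝ) ^ (-1 / ((p : ℝ) - 1)) * ‖(m : K)‖},
        ‖(F x : K) - (F y : K)‖ = ‖(x : K) - (y : K)‖ := by

  classical
  have hp1 : (1 : ℝ) < p := by exact_mod_cast hp.one_lt
  set ε : ℝ := (p : ℝ) ^ (-1 / ((p : ℝ) - 1)) with hεdef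
  set M : ℝ := ‖(m : K)‖ with hMdef
  have hε0 : 0 < ε := Real.rpow_pos_of_pos (by linarith) _
  have hε1 : ε ≤ 1 := by
    apply Real.rpow_le_one_of_one_le_of_nonpos (by linarith)
    apply div_nonpos_of_nonpos_of_nonneg <;> linarith
  have hεlt1 : ε < 1 := by
    apply Real.rpow_lt_one_of_one_lt_of_neg hp1
    apply div_neg_of_neg_of_pos <;> linarith
  have hm0 : (m : K) ≠ 0 := Nat.cast_ne_zero.2 (by omega)
  have hMpos : 0 < M := norm_pos_iff.2 hm0
  have hM1 : M ≤ 1 := IsUltrametricDist.norm_natCast_le_one K m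
  set r : ℝ := ε * M with hrdef
  have hr0 : 0 < r := mul_pos hε0 hMpos
  have hr1 : r ≤ 1 := by
    calc ε * M ≤ 1 * 1 := mul_le_mul hε1 hM1 hMpos.le zero_le_one
      _ = 1 := one_mul 1
  have hq1 : 1 ≤ r⁻¹ := (one_le_inv_iff₀).2 ⟨hr0, hr1⟩
  set c : ℕ → K := fun k => PowerSeries.coeff k f with hcdef
  have hc0 : c 0 = 0 := hf0
  have hc1 : c 1 = 1 := hf1
  have hcb : ∀ k, 2 ≤ k → ‖c k‖ ≤ ε * (r⁻¹) ^ (k - 1) := by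
    intro k hk
    have := bottcher_coeff_bound p hp hpnorm m hm hMpos φ hφint hφlow hφlead f hf0 hf1 hfB k hk
    rw [hrdef]
    exact this
  have hcb' : ∀ k, 1 ≤ k → ‖c k‖ ≤ (r⁻¹) ^ (k - 1) := by
    intro k hk
    rcases eq_or_lt_of_le hk with h1 | h2
    · rw [← h1, hc1, norm_one]; norm_num
    · calc ‖c k‖ ≤ ε * (r⁻¹) ^ (k - 1) := hcb k (by omega)
        _ ≤ 1 * (r⁻¹) ^ (k - 1) := mul_le_mul_of_nonneg_right hε1 (by positivity)
        _ = (r⁻¹) ^ (k - 1) := one_mul _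
  -- geometric bound for the terms
  have hterm : ∀ x : K, ‖x‖ < r → ∀ k, ‖c k * x ^ k‖ ≤ (‖x‖ * r⁻¹) ^ k := by
    intro x hx k
    rcases Nat.eq_zero_or_pos k with rfl | hk
    · simp [hc0]
    rw [norm_mul, norm_pow]
    have h1 : ‖c k‖ ≤ (r⁻¹) ^ k := by
      calc ‖c k‖ ≤ (r⁻¹) ^ (k - 1) := hcb' k hk
        _ ≤ (r⁻¹) ^ k := pow_le_pow_right₀ hq1 (by omega)
    calc ‖c k‖ * ‖x‖ ^ k ≤ (r⁻¹) ^ k * ‖x‖ ^ k := by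
          exact mul_le_mul_of_nonneg_right h1 (by positivity)
      _ = (‖x‖ * r⁻¹) ^ k := by rw [← mul_pow]; ring_nf
  have hsummable : ∀ x : K, ‖x‖ < r → Summable (fun k => c k * x ^ k) := by
    intro x hx
    apply NonarchimedeanAddGroup.summable_of_tendsto_cofinite_zero
    rw [Nat.cofinite_eq_atTop]
    have hθ0 : 0 ≤ ‖x‖ * r⁻¹ := by positivity
    have hθ1 : ‖x‖ * r⁻¹ < 1 := by
      calc ‖x‖ * r⁻¹ < r * r⁻¹ := by
            exact mul_lt_mul_of_pos_right hx (by positivity)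
        _ = 1 := mul_inv_cancel₀ (ne_of_gt hr0)
    exact squeeze_zero_norm (hterm x hx) (tendsto_pow_atTop_nhds_zero_of_lt_one hθ0 hθ1)
  set Fc : K → K := fun x => ∑' k, c k * x ^ k with hFcdef
  have hFc : ∀ x : K, ‖x‖ < r → HasSum (fun k => c k * x ^ k) (Fc x) := fun x hx =>
    (hsummable x hx).hasSum
  -- the key contraction estimate
  have hkey : ∀ x y : K, ‖x‖ < r → ‖y‖ < r →
      ‖(Fc x - Fc y) - (x - y)‖ ≤ ε * ‖x - y‖ := by
    intro x y hx hy
    have h1 : HasSum (fun k => c k * x ^ k - c k * y ^ k) (Fc x - Fc y) :=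
      (hFc x hx).sub (hFc y hy)
    have h2 : HasSum (fun k : ℕ => if k = 1 then x - y else 0) (x - y) :=
      hasSum_ite_eq 1 (x - y)
    have h3 := h1.sub h2
    refine norm_hasSum_le h3 (by positivity) ?_
    intro k
    match k with
    | 0 => simp [hc0]; exact mul_nonneg hε0.le (norm_nonneg _)
    | 1 => simp [hc1]; exact mul_nonneg hε0.le (norm_nonneg _)
    | (j + 2) =>
      rw [if_neg (by omega), sub_zero, ← mul_sub, norm_mul]
      have hMxy : max ‖x‖ ‖y‖ < r := max_lt hx hy
      have hc2 : ‖c (j + 2)‖ ≤ ε * (r⁻¹) ^ (j + 1) := by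
        have := hcb (j + 2) (by omega)
        simpa using this
      calc ‖c (j + 2)‖ * ‖x ^ (j + 2) - y ^ (j + 2)‖
          ≤ (ε * (r⁻¹) ^ (j + 1)) * (‖x - y‖ * (max ‖x‖ ‖y‖) ^ (j + 1)) :=
            mul_le_mul hc2 (norm_pow_sub_pow_le x y (j + 1)) (norm_nonneg _) (by positivity)
        _ = (ε * ‖x - y‖) * (r⁻¹ * max ‖x‖ ‖y‖) ^ (j + 1) := by rw [mul_pow]; ring
        _ ≤ (ε * ‖x - y‖) * 1 := by
            refine mul_le_mul_of_nonneg_left (pow_le_one₀ (by positivity) ?_) (by positivity)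
            calc r⁻¹ * max ‖x‖ ‖y‖ ≤ r⁻¹ * r :=
                  mul_le_mul_of_nonneg_left hMxy.le (by positivity)
              _ = 1 := inv_mul_cancel₀ (ne_of_gt hr0)
        _ = ε * ‖x - y‖ := mul_one _
  have hFc0 : Fc 0 = 0 := by
    have hz : ∀ k : ℕ, c k * (0 : K) ^ k = 0 := by
      intro k
      rcases Nat.eq_zero_or_pos k with rfl | hk
      · simp [hc0]
      · rw [zero_pow (by omega), mul_zero]
    calc Fc 0 = ∑' k : ℕ, c k * (0 : K) ^ k := rfl
      _ = ∑' _ : ℕ, (0 : K) := tsum_congr hz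
      _ = 0 := tsum_zero
  have hiso : ∀ x y : K, ‖x‖ < r → ‖y‖ < r → ‖Fc x - Fc y‖ = ‖x - y‖ := by
    intro x y hx hy
    by_cases hxy : x = y
    · subst hxy; simp
    · have hpos : 0 < ‖x - y‖ := by
        rw [norm_pos_iff]; exact sub_ne_zero.2 hxy
      have hlt : ‖(Fc x - Fc y) - (x - y)‖ < ‖x - y‖ :=
        lt_of_le_of_lt (hkey x y hx hy) (by nlinarith)
      have hE : Fc x - Fc y = (x - y) + ((Fc x - Fc y) - (x - y)) := by ring
      rw [hE]
      have hle : ‖(x - y) + ((Fc x - Fc y) - (x - y))‖ ≤ ‖x - y‖ :=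
        le_trans (IsUltrametricDist.norm_add_le_max _ _) (max_le le_rfl hlt.le)
      refine le_antisymm hle ?_
      have h2 : ‖x - y‖ ≤ max ‖(x - y) + ((Fc x - Fc y) - (x - y))‖ ‖(Fc x - Fc y) - (x - y)‖ := by
        have h3 := norm_sub_le_max' ((x - y) + ((Fc x - Fc y) - (x - y))) ((Fc x - Fc y) - (x - y))
        simpa using h3
      rcases max_cases ‖(x - y) + ((Fc x - Fc y) - (x - y))‖ ‖(Fc x - Fc y) - (x - y)‖ with
        ⟨heq, _⟩ | ⟨heq, _⟩
      · rwa [heq] at h2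
      · rw [heq] at h2; exact absurd (lt_of_le_of_lt h2 hlt) (lt_irrefl _)
  have hFnorm : ∀ x : K, ‖x‖ < r → ‖Fc x‖ = ‖x‖ := by
    intro x hx
    have h0 : ‖(0 : K)‖ < r := by rw [norm_zero]; exact hr0
    have := hiso x 0 hx h0
    rw [hFc0] at this
    simpa using this
  -- surjectivity via the Banach fixed point theorem
  have hsurj : ∀ y : K, ‖y‖ < r → ∃ x : K, ‖x‖ ≤ ‖y‖ ∧ Fc x = y := by
    intro y hy
    haveI hne : Nonempty (Metric.closedBall (0 : K) ‖y‖) :=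
      ⟨⟨0, Metric.mem_closedBall_self (norm_nonneg y)⟩⟩
    haveI : CompleteSpace (Metric.closedBall (0 : K) ‖y‖) :=
      Metric.isClosed_closedBall.completeSpace_coe
    have hball : ∀ z : K, z ∈ Metric.closedBall (0 : K) ‖y‖ → ‖z‖ ≤ ‖y‖ := by
      intro z hz
      rwa [Metric.mem_closedBall, dist_zero_right] at hz
    have hgdiff : ∀ z : K, ‖z‖ < r → ‖Fc z - z‖ ≤ ε * ‖z‖ := by
      intro z hz
      have := hkey z 0 hz (by rw [norm_zero]; exact hr0)
      rw [hFc0] at this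
      simpa using this
    set T : Metric.closedBall (0 : K) ‖y‖ → Metric.closedBall (0 : K) ‖y‖ := fun z =>
      ⟨y - (Fc z - z), by
        rw [Metric.mem_closedBall, dist_zero_right]
        have hzle : ‖(z : K)‖ ≤ ‖y‖ := hball z z.2
        have hzr : ‖(z : K)‖ < r := lt_of_le_of_lt hzle hy
        refine le_trans (norm_sub_le_max' _ _) (max_le le_rfl ?_)
        calc ‖Fc z - z‖ ≤ ε * ‖(z : K)‖ := hgdiff z hzr
          _ ≤ 1 * ‖y‖ := mul_le_mul hε1 hzle (norm_nonneg _) zero_le_one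
          _ = ‖y‖ := one_mul _⟩ with hTdef
    have hcontr : ContractingWith ⟨ε, hε0.le⟩ T := by
      constructor
      · exact_mod_cast hεlt1
      · refine LipschitzWith.of_dist_le_mul ?_
        intro z z'
        rw [Subtype.dist_eq, Subtype.dist_eq, dist_eq_norm, dist_eq_norm]; change _ ≤ ε * _
        have hzr : ‖(z : K)‖ < r := lt_of_le_of_lt (hball z z.2) hy
        have hz'r : ‖(z' : K)‖ < r := lt_of_le_of_lt (hball z' z'.2) hy
        have hrw : ((T z : K)) - ((T z' : K)) = (Fc z' - Fc z) - ((z' : K) - (z : K)) := by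
          rw [hTdef]; ring
        rw [hrw]
        calc ‖(Fc z' - Fc z) - ((z' : K) - (z : K))‖ ≤ ε * ‖(z' : K) - (z : K)‖ :=
              hkey z' z hz'r hzr
          _ = ε * ‖(z : K) - (z' : K)‖ := by rw [norm_sub_rev]
    obtain ⟨z, hfix⟩ : ∃ z, T z = z := ⟨ContractingWith.fixedPoint T hcontr,
      ContractingWith.fixedPoint_isFixedPt hcontr⟩
    have hval : y - (Fc z - z) = (z : K) := congrArg Subtype.val hfix
    refine ⟨(z : K), hball z z.2, ?_⟩
    linear_combination -hval
  -- assemble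
  refine ⟨fun x => ⟨Fc x, by rw [hFnorm x x.2]; exact x.2⟩, ⟨?_, ?_⟩, ?_, ?_⟩
  · intro a b hab
    have h1 : Fc a = Fc b := congrArg Subtype.val hab
    have h2 : ‖(a : K) - (b : K)‖ = 0 := by
      rw [← hiso a b a.2 b.2, h1, sub_self, norm_zero]
    exact Subtype.ext (sub_eq_zero.1 (norm_eq_zero.1 h2))
  · intro y
    obtain ⟨x, hxle, hxF⟩ := hsurj y y.2
    exact ⟨⟨x, lt_of_le_of_lt hxle y.2⟩, Subtype.ext hxF⟩
  · intro x
    exact hFc x x.2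
  · intro x y
    exact hiso x y x.2 y.2
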